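/- Euler's first identity: for complex q, z with |q| < 1 and |z| < 1, ∑_{n=0}^∞ z^n / (q;q)_n = 1 / (z;q)_∞. -/

import Mathlib

open Finset Filter Topology

/-- Finite q-Pochhammer symbol: (a;q)_n = ∏_{k=0}^{n-1} (1 - a q^k). -/
noncomputable def qp (a q : ℂ) (n : ℕ) : ℂ := ∏ k ∈ Finset.range n, (1 - a * q ^ k)

/-- Infinite q-Pochhammer symbol: (a;q)_∞ = ∏_{k=0}^∞ (1 - a q^k). -/
noncomputable def qpInf (a q : ℂ) : ℂ := ∏' k : ℕ, (1 - a * q ^ k)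

lemma exp_le_one_sub_aux {a x : ℝ} (hx0 : 0 ≤ x) (hxa : x ≤ a) (ha : a < 1) :
    Real.exp (-(x / (1 - a))) ≤ 1 - x := by
  have h1a : 0 < 1 - a := by linarith
  have h1x : 0 < 1 - x := by linarith
  have h2 : x / (1 - x) ≤ x / (1 - a) := by gcongr <;> linarith
  have key : (1 - x)⁻¹ = x / (1 - x) + 1 := by field_simp; ring
  have h3 : (1 - x)⁻¹ ≤ Real.exp (x / (1 - x)) := by
    rw [key]; exact Real.add_one_le_exp _
  calc Real.exp (-(x / (1 - a))) ≤ Real.exp (-(x / (1 - x))) := by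
        apply Real.exp_le_exp.2; linarith
    _ = (Real.exp (x / (1 - x)))⁻¹ := Real.exp_neg _
    _ ≤ ((1 - x)⁻¹)⁻¹ := inv_anti₀ (by positivity) h3
    _ = 1 - x := inv_inv _

lemma qp_lower {q : ℂ} (hq : ‖q‖ < 1) (n : ℕ) :
    Real.exp (-(‖q‖ / (1 - ‖q‖) ^ 2)) ≤ ‖qp q q n‖ := by
  set a := ‖q‖ with ha
  have ha0 : 0 ≤ a := norm_nonneg _
  have h1a : 0 < 1 - a := by linarith
  have hgeo : ∑ k ∈ range n, a ^ k ≤ (1 - a)⁻¹ := by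
    have h := Summable.sum_le_tsum (range n) (fun i _ => pow_nonneg ha0 i)
      (summable_geometric_of_lt_one ha0 hq)
    rwa [tsum_geometric_of_lt_one ha0 hq] at h
  have hsum : ∑ k ∈ range n, a ^ (k + 1) ≤ a * (1 - a)⁻¹ := by
    have h1 : ∑ k ∈ range n, a ^ (k + 1) = a * ∑ k ∈ range n, a ^ k := by
      rw [Finset.mul_sum]; exact Finset.sum_congr rfl fun k _ => pow_succ' a k
    rw [h1]; gcongr
  calc Real.exp (-(a / (1 - a) ^ 2))
      ≤ Real.exp (∑ k ∈ range n, -(a ^ (k + 1) / (1 - a))) := by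
        apply Real.exp_le_exp.2
        rw [Finset.sum_neg_distrib, neg_le_neg_iff, ← Finset.sum_div,
          div_le_div_iff₀ h1a (by positivity)]
        calc (∑ k ∈ range n, a ^ (k + 1)) * (1 - a) ^ 2
            ≤ (a * (1 - a)⁻¹) * (1 - a) ^ 2 := by gcongr
          _ = a * (1 - a) := by field_simp
    _ = ∏ k ∈ range n, Real.exp (-(a ^ (k + 1) / (1 - a))) := Real.exp_sum _ _
    _ ≤ ∏ k ∈ range n, (1 - a ^ (k + 1)) := by
        apply Finset.prod_le_prod (fun k _ => (Real.exp_pos _).le)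
        intro k _
        exact exp_le_one_sub_aux (by positivity)
          (pow_le_of_le_one ha0 hq.le (Nat.succ_ne_zero k)) hq
    _ ≤ ∏ k ∈ range n, ‖1 - q * q ^ k‖ := by
        apply Finset.prod_le_prod
        · intro k _
          have : a ^ (k + 1) ≤ 1 := pow_le_one₀ ha0 hq.le
          linarith
        · intro k _
          have hnorm : ‖q * q ^ k‖ = a ^ (k + 1) := by
            rw [norm_mul, norm_pow, ← pow_succ']
          calc 1 - a ^ (k + 1) = ‖(1 : ℂ)‖ - ‖q * q ^ k‖ := by rw [norm_one, hnorm]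
            _ ≤ ‖1 - q * q ^ k‖ := norm_sub_norm_le _ _
    _ = ‖qp q q n‖ := by rw [qp, norm_prod]

lemma summable_euler {q : ℂ} (hq : ‖q‖ < 1) {w : ℂ} (hw : ‖w‖ < 1) :
    Summable (fun n : ℕ => w ^ n / qp q q n) := by
  apply Summable.of_norm_bounded (g := fun n => ‖w‖ ^ n / Real.exp (-(‖q‖ / (1 - ‖q‖) ^ 2)))
    ((summable_geometric_of_lt_one (norm_nonneg w) hw).div_const _)
  intro n
  rw [norm_div, norm_pow]
  gcongr
  exact qp_lower hq n

lemma qp_succ (q : ℂ) (n : ℕ) : qp q q (n + 1) = qp q q n * (1 - q ^ (n + 1)) := by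
  rw [qp, qp, Finset.prod_range_succ, ← pow_succ']

lemma qp_ne_zero {q : ℂ} (hq : ‖q‖ < 1) (n : ℕ) : qp q q n ≠ 0 := by
  intro h
  have := qp_lower hq n
  rw [h, norm_zero] at this
  exact absurd this (not_le.2 (Real.exp_pos _))

lemma feq {q : ℂ} (hq : ‖q‖ < 1) {w : ℂ} (hw : ‖w‖ < 1) :
    (1 - w) * ∑' n : ℕ, w ^ n / qp q q n = ∑' n : ℕ, (w * q) ^ n / qp q q n := by
  have hwq : ‖w * q‖ < 1 := by
    rw [norm_mul]
    nlinarith [norm_nonneg w, norm_nonneg q]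
  set S := ∑' n : ℕ, w ^ n / qp q q n with hSdef
  set S' := ∑' n : ℕ, (w * q) ^ n / qp q q n with hS'def
  have hA : HasSum (fun n : ℕ => w ^ n / qp q q n) S := (summable_euler hq hw).hasSum
  have hC : HasSum (fun n : ℕ => (w * q) ^ n / qp q q n) S' := (summable_euler hq hwq).hasSum
  set g : ℕ → ℂ := fun n => w ^ n * (1 - q ^ n) / qp q q n with hgdef
  have hg : ∀ n : ℕ, g (n + 1) = w * (w ^ n / qp q q n) := by
    intro n
    have hqn : (1 : ℂ) - q ^ (n + 1) ≠ 0 := by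
      rw [sub_ne_zero]
      intro h
      have : ‖(1 : ℂ)‖ = ‖q ^ (n + 1)‖ := by rw [h]
      rw [norm_one, norm_pow] at this
      have : ‖q‖ ^ (n + 1) < 1 := pow_lt_one₀ (norm_nonneg q) hq (Nat.succ_ne_zero n)
      linarith
    have hP := qp_ne_zero hq n
    rw [hgdef]
    simp only
    rw [qp_succ]
    field_simp
    ring
  have hg1 : HasSum (fun n : ℕ => g (n + 1)) (w * S) := by
    have h := hA.mul_left w
    have hfun : (fun n : ℕ => g (n + 1)) = fun n : ℕ => w * (w ^ n / qp q q n) :=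
      funext fun n => hg n
    rw [hfun]
    exact h
  have hg0 : HasSum g (w * S) := by
    have h := (hasSum_nat_add_iff 1).1 hg1
    simpa [hgdef, qp] using h
  have hAC : HasSum g (S - S') := by
    have h := hA.sub hC
    have hfun : (fun n : ℕ => w ^ n / qp q q n - (w * q) ^ n / qp q q n) = g := by
      funext n
      rw [hgdef]
      simp only
      rw [mul_pow, mul_sub, mul_one, sub_div]
    rwa [hfun] at h
  have huniq : w * S = S - S' := hg0.unique hAC
  linear_combination -huniq

lemma iterate_feq {q z : ℂ} (hq : ‖q‖ < 1) (hz : ‖z‖ < 1) (N : ℕ) :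
    qp z q N * ∑' n : ℕ, z ^ n / qp q q n = ∑' n : ℕ, (z * q ^ N) ^ n / qp q q n := by
  induction N with
  | zero => simp [qp]
  | succ N ih =>
    have hzN : ‖z * q ^ N‖ < 1 := by
      rw [norm_mul, norm_pow]
      exact lt_of_le_of_lt
        (mul_le_of_le_one_right (norm_nonneg z) (pow_le_one₀ (norm_nonneg q) hq.le)) hz
    have hstep := feq hq hzN
    have harg : z * q ^ N * q = z * q ^ (N + 1) := by rw [mul_assoc, ← pow_succ]
    rw [harg] at hstep
    rw [qp, Finset.prod_range_succ, ← qp]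
    calc qp z q N * (1 - z * q ^ N) * ∑' n : ℕ, z ^ n / qp q q n
        = (1 - z * q ^ N) * (qp z q N * ∑' n : ℕ, z ^ n / qp q q n) := by ring
      _ = (1 - z * q ^ N) * ∑' n : ℕ, (z * q ^ N) ^ n / qp q q n := by rw [ih]
      _ = ∑' n : ℕ, (z * q ^ (N + 1)) ^ n / qp q q n := hstep

lemma S_sub_one {q : ℂ} (hq : ‖q‖ < 1) {w : ℂ} (hw : ‖w‖ < 1) :
    ‖(∑' n : ℕ, w ^ n / qp q q n) - 1‖ ≤
      ‖w‖ * (1 - ‖w‖)⁻¹ / Real.exp (-(‖q‖ / (1 - ‖q‖) ^ 2)) := by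
  set c := Real.exp (-(‖q‖ / (1 - ‖q‖) ^ 2)) with hc
  have hA : HasSum (fun n : ℕ => w ^ n / qp q q n) (∑' n : ℕ, w ^ n / qp q q n) :=
    (summable_euler hq hw).hasSum
  have h1 : HasSum (fun n : ℕ => w ^ (n + 1) / qp q q (n + 1))
      ((∑' n : ℕ, w ^ n / qp q q n) - 1) := by
    apply (hasSum_nat_add_iff (f := fun n : ℕ => w ^ n / qp q q n) 1).2
    have h0 : (∑ i ∈ range 1, w ^ i / qp q q i) = 1 := by simp [qp]
    rw [h0]
    simpa using hA
  have hb : HasSum (fun n : ℕ => ‖w‖ ^ (n + 1) / c) (‖w‖ * (1 - ‖w‖)⁻¹ / c) := by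
    have h := ((hasSum_geometric_of_lt_one (norm_nonneg w) hw).mul_left ‖w‖).div_const c
    have hfun : (fun n : ℕ => ‖w‖ * ‖w‖ ^ n / c) = fun n : ℕ => ‖w‖ ^ (n + 1) / c :=
      funext fun n => by rw [pow_succ']
    rwa [hfun] at h
  rw [← h1.tsum_eq]
  apply tsum_of_norm_bounded hb
  intro n
  rw [norm_div, norm_pow]
  gcongr
  exact qp_lower hq (n + 1)

lemma tendsto_S_one {q z : ℂ} (hq : ‖q‖ < 1) (hz : ‖z‖ < 1) :
    Tendsto (fun N : ℕ => ∑' n : ℕ, (z * q ^ N) ^ n / qp q q n) atTop (𝓝 1) := by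
  set c := Real.exp (-(‖q‖ / (1 - ‖q‖) ^ 2)) with hc
  have hcpos : 0 < c := Real.exp_pos _
  have h1z : 0 < 1 - ‖z‖ := by linarith
  rw [tendsto_iff_norm_sub_tendsto_zero]
  apply squeeze_zero (fun N => norm_nonneg _)
    (g := fun N => ‖z‖ * (1 - ‖z‖)⁻¹ / c * ‖q‖ ^ N)
  · intro N
    have hwle : ‖z * q ^ N‖ ≤ ‖z‖ := by
      rw [norm_mul, norm_pow]
      exact mul_le_of_le_one_right (norm_nonneg z) (pow_le_one₀ (norm_nonneg q) hq.le)
    have hwlt : ‖z * q ^ N‖ < 1 := lt_of_le_of_lt hwle hz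
    refine (S_sub_one hq hwlt).trans ?_
    have heq : ‖z * q ^ N‖ = ‖z‖ * ‖q‖ ^ N := by rw [norm_mul, norm_pow]
    calc ‖z * q ^ N‖ * (1 - ‖z * q ^ N‖)⁻¹ / c
        ≤ ‖z * q ^ N‖ * (1 - ‖z‖)⁻¹ / c := by
          gcongr
          all_goals first
            | exact norm_nonneg _
            | linarith
      _ = ‖z‖ * (1 - ‖z‖)⁻¹ / c * ‖q‖ ^ N := by rw [heq]; ring
  · have := (tendsto_pow_atTop_nhds_zero_of_lt_one (norm_nonneg q) hq).const_mul
      (‖z‖ * (1 - ‖z‖)⁻¹ / c)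
    simpa using this

lemma multipliable_aux {q z : ℂ} (hq : ‖q‖ < 1) (hz : ‖z‖ < 1) :
    HasProd (fun k : ℕ => 1 - z * q ^ k) (qpInf z q) := by
  have hne : ∀ x : Unit, ∀ k : ℕ, (fun k (_ : Unit) => 1 - z * q ^ k) k x ≠ 0 := by
    intro _ k
    simp only
    rw [sub_ne_zero]
    intro h
    have h1 : ‖(1 : ℂ)‖ = ‖z * q ^ k‖ := by rw [h]
    rw [norm_one, norm_mul, norm_pow] at h1
    have : ‖z‖ * ‖q‖ ^ k < 1 :=
      lt_of_le_of_lt (mul_le_of_le_one_right (norm_nonneg z) (pow_le_one₀ (norm_nonneg q) hq.le)) hz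
    linarith
  have hlog : Summable fun k : ℕ => Complex.log (1 - z * q ^ k) := by
    set C := ‖z‖ * (1 - ‖z‖)⁻¹ / 2 + 1 with hC
    have h1z : 0 < 1 - ‖z‖ := by linarith
    apply Summable.of_norm_bounded (g := fun k => C * ‖z‖ * ‖q‖ ^ k)
      ((summable_geometric_of_lt_one (norm_nonneg q) hq).mul_left _)
    intro k
    set u := ‖z‖ * ‖q‖ ^ k with hu
    have hu0 : 0 ≤ u := by positivity
    have hule : u ≤ ‖z‖ :=
      mul_le_of_le_one_right (norm_nonneg z) (pow_le_one₀ (norm_nonneg q) hq.le)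
    have hult : u < 1 := lt_of_le_of_lt hule hz
    have hnorm : ‖-(z * q ^ k)‖ = u := by rw [norm_neg, norm_mul, norm_pow]
    have hrw : (1 : ℂ) - z * q ^ k = 1 + -(z * q ^ k) := by ring
    rw [hrw]
    refine (Complex.norm_log_one_add_le (by rw [hnorm]; exact hult)).trans ?_
    rw [hnorm]
    have hinv : (1 - u)⁻¹ ≤ (1 - ‖z‖)⁻¹ := inv_anti₀ h1z (by linarith)
    have h2 : u ^ 2 * (1 - u)⁻¹ / 2 ≤ ‖z‖ * u * (1 - ‖z‖)⁻¹ / 2 := by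
      have : u ^ 2 * (1 - u)⁻¹ ≤ ‖z‖ * u * (1 - ‖z‖)⁻¹ := by
        apply mul_le_mul (by nlinarith) hinv (inv_nonneg.2 (by linarith)) (by positivity)
      linarith
    have : C * ‖z‖ * ‖q‖ ^ k = ‖z‖ * u * (1 - ‖z‖)⁻¹ / 2 + u := by
      rw [hC, hu]; ring
    rw [this]
    linarith
  exact (Complex.multipliable_of_summable_log hlog).hasProd

/-- Euler's first identity. -/
theorem euler_first_identity (q z : ℂ) (hq : ‖q‖ < 1) (hz : ‖z‖ < 1) :
    HasSum (fun n : ℕ => z ^ n / qp q q n) (1 / qpInf z q) := by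
  set S := ∑' n : ℕ, z ^ n / qp q q n with hSdef
  have hA : HasSum (fun n : ℕ => z ^ n / qp q q n) S := (summable_euler hq hz).hasSum
  have hprod := multipliable_aux hq hz
  have hT1 : Tendsto (fun N : ℕ => qp z q N) atTop (𝓝 (qpInf z q)) := by
    have := hprod.tendsto_prod_nat
    simpa [qp] using this
  have key : qpInf z q * S = 1 := by
    have h1 : Tendsto (fun N : ℕ => qp z q N * S) atTop (𝓝 (qpInf z q * S)) := hT1.mul_const S
    have h2 : (fun N : ℕ => qp z q N * S) =
        fun N : ℕ => ∑' n : ℕ, (z * q ^ N) ^ n / qp q q n := funext (iterate_feq hq hz)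
    rw [h2] at h1
    exact tendsto_nhds_unique h1 (tendsto_S_one hq hz)
  have hSeq : S = 1 / qpInf z q := eq_one_div_of_mul_eq_one_right key
  rw [← hSeq]
  exact hA
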